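/- There exists a finite connected simple graph G and pairwise distinct vertices v, w, u of G such that d(v,u) = d(v,w) + d(w,u) (i.e., w lies on a shortest path from v to u) and the discriminative distance satisfies the strict inequality dd(v,u) < dd(v,w) + dd(w,u). -/

import Mathlib

/-- The number of shortest paths between `v` and `u`: walks from `v` to `u`
whose length equals the graph distance (such walks are exactly the shortest paths). -/
noncomputable def nsp {V : Type*} (G : SimpleGraph V) (v u : V) : ℕ :=
  Nat.card {p : G.Walk v u // p.length = G.dist v u}

/-- The discriminative distance `dd(v,u) = d(v,u) / σ(v,u)`. -/
noncomputable def dd {V : Type*} (G : SimpleGraph V) (v u : V) : ℝ :=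
  (G.dist v u : ℝ) / (nsp G v u : ℝ)

def C4 : SimpleGraph (Fin 4) where
  Adj a b := b = a + 1 ∨ a = b + 1
  symm := by constructor; intro a b; fin_cases a <;> fin_cases b <;> decide
  loopless := by constructor; intro a; fin_cases a <;> decide

instance : DecidableRel C4.Adj := fun a b =>
  inferInstanceAs (Decidable (b = a + 1 ∨ a = b + 1))

lemma adj01 : C4.Adj 0 1 := by decide
lemma adj12 : C4.Adj 1 2 := by decide
lemma adj03 : C4.Adj 0 3 := by decide
lemma adj32 : C4.Adj 3 2 := by decide

lemma c4_conn : C4.Connected := by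
  rw [SimpleGraph.connected_iff]
  refine ⟨fun a b => ?_, ⟨0⟩⟩
  have h0 : ∀ x : Fin 4, C4.Reachable 0 x := by
    intro x
    fin_cases x
    · rfl
    · exact adj01.reachable
    · exact ⟨(SimpleGraph.Walk.cons adj01 (SimpleGraph.Walk.cons adj12 SimpleGraph.Walk.nil))⟩
    · exact adj03.reachable
  exact (h0 a).symm.trans (h0 b)

lemma walk_len_one {v u : Fin 4} (h : C4.Adj v u) (p : C4.Walk v u) (hp : p.length = 1) :
    p = SimpleGraph.Walk.cons h SimpleGraph.Walk.nil := by
  cases p with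
  | nil => simp at hp
  | cons h' q =>
    cases q with
    | nil => rfl
    | cons h'' q' => simp at hp

lemma dist01 : C4.dist 0 1 = 1 := SimpleGraph.dist_eq_one_iff_adj.mpr adj01
lemma dist12 : C4.dist 1 2 = 1 := SimpleGraph.dist_eq_one_iff_adj.mpr adj12

def P1 : C4.Walk 0 2 := SimpleGraph.Walk.cons adj01 (SimpleGraph.Walk.cons adj12 SimpleGraph.Walk.nil)
def P2 : C4.Walk 0 2 := SimpleGraph.Walk.cons adj03 (SimpleGraph.Walk.cons adj32 SimpleGraph.Walk.nil)

lemma dist02 : C4.dist 0 2 = 2 := by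
  have hle : C4.dist 0 2 ≤ 2 := SimpleGraph.dist_le P1
  have hpos : 0 < C4.dist 0 2 := c4_conn.pos_dist_of_ne (by decide)
  have hne1 : C4.dist 0 2 ≠ 1 := by
    intro h
    exact absurd (SimpleGraph.dist_eq_one_iff_adj.mp h) (by decide)
  omega

lemma nsp_one {v u : Fin 4} (h : C4.Adj v u) (hd : C4.dist v u = 1) : nsp C4 v u = 1 := by
  rw [nsp, Nat.card_eq_one_iff_unique]
  constructor
  · constructor
    intro ⟨p, hp⟩ ⟨q, hq⟩
    rw [hd] at hp hq
    exact Subtype.ext ((walk_len_one h p hp).trans (walk_len_one h q hq).symm)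
  · exact ⟨⟨SimpleGraph.Walk.cons h SimpleGraph.Walk.nil, by simp [hd]⟩⟩

lemma P1_ne_P2 : P1 ≠ P2 := by
  intro h
  have := congrArg (fun p => p.getVert 1) h
  simp [P1, P2, SimpleGraph.Walk.getVert] at this

lemma nsp02 : 2 ≤ nsp C4 0 2 := by
  rw [nsp, Nat.card_eq_fintype_card]
  refine Fintype.one_lt_card_iff_nontrivial.mpr ⟨⟨P1, by rw [dist02]; rfl⟩, ⟨P2, by rw [dist02]; rfl⟩, ?_⟩
  simp [P1_ne_P2]

theorem stmt10 :
    ∃ (V : Type) (_ : Fintype V) (G : SimpleGraph V) (v w u : V),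
      G.Connected ∧ v ≠ w ∧ v ≠ u ∧ w ≠ u ∧
      G.dist v u = G.dist v w + G.dist w u ∧
      dd G v u < dd G v w + dd G w u := by
  refine ⟨Fin 4, inferInstance, C4, 0, 1, 2, c4_conn, by decide, by decide, by decide, ?_, ?_⟩
  · rw [dist01, dist12, dist02]
  · rw [dd, dd, dd, dist01, dist12, dist02, nsp_one adj01 dist01, nsp_one adj12 dist12]
    have h2 : (2 : ℝ) ≤ (nsp C4 0 2 : ℝ) := by exact_mod_cast nsp02
    have hpos : (0 : ℝ) < (nsp C4 0 2 : ℝ) := by linarith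
    rw [div_lt_iff₀ hpos]
    nlinarith
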